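/- Let ℓ be a prime, n = 2, and f : GL_2(Q_ℓ) → C a right GL_2(Z_ℓ)-invariant integrable function with μ_f(S) = ∫_S f dx. Let M be the integral matrices in GL_2(Q_ℓ), M^{≥1} those with det of valuation ≥ 1, t₁ = diag(ℓ,1), t₂ = diag(ℓ,ℓ). Then μ_f(M^{≥1}) = (ℓ+1)·μ_f(M t₁) - ℓ·μ_f(M t₂). -/

import Mathlib

open MeasureTheory

noncomputable section

/-- `M`: the integral matrices in `GL₂(ℚ_ℓ)`. -/
def Mint (ℓ : ℕ) [Fact ℓ.Prime] : Set (Matrix (Fin 2) (Fin 2) ℚ_[ℓ]) :=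
  {x | (∀ i j, ‖x i j‖ ≤ 1) ∧ IsUnit x}

/-- `M^{≥1}`: integral matrices whose determinant has `ℓ`-adic valuation `≥ 1`. -/
def MintGeOne (ℓ : ℕ) [Fact ℓ.Prime] : Set (Matrix (Fin 2) (Fin 2) ℚ_[ℓ]) :=
  {x ∈ Mint ℓ | ‖x.det‖ ≤ ((ℓ : ℝ))⁻¹}

/-- `t_m = diag(ℓ,…,ℓ,1,…,1)` with `m` copies of `ℓ` (here `2×2`). -/
def tDiag (ℓ : ℕ) [Fact ℓ.Prime] (m : ℕ) : Matrix (Fin 2) (Fin 2) ℚ_[ℓ] :=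
  Matrix.diagonal fun i => if (i : ℕ) < m then (ℓ : ℚ_[ℓ]) else 1

/-- The coset `M·t_m`. -/
def Mt (ℓ : ℕ) [Fact ℓ.Prime] (m : ℕ) : Set (Matrix (Fin 2) (Fin 2) ℚ_[ℓ]) :=
  (fun x => x * tDiag ℓ m) '' Mint ℓ

namespace Statement18Aux

variable (ℓ : ℕ) [Fact ℓ.Prime]

/-! ### Elementary `p`-adic norm lemmas -/

lemma res_exists (z : ℚ_[ℓ]) (hz : ‖z‖ ≤ 1) : ∃ a : ℕ, a < ℓ ∧ ‖z - (a:ℚ_[ℓ])‖ ≤ (ℓ:ℝ)⁻¹ := by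
  set w : ℤ_[ℓ] := ⟨z, hz⟩ with hw
  refine ⟨w.zmodRepr, w.zmodRepr_lt_p, ?_⟩
  have h := PadicInt.sub_zmodRepr_mem w
  rw [PadicInt.maximalIdeal_eq_span_p] at h
  have h2 : ‖w - (w.zmodRepr : ℤ_[ℓ])‖ ≤ (ℓ:ℝ)^(-(1:ℕ):ℤ) := by
    rw [PadicInt.norm_le_pow_iff_mem_span_pow]
    simpa using h
  have h3 : ((w - (w.zmodRepr : ℤ_[ℓ]) : ℤ_[ℓ]) : ℚ_[ℓ]) = z - (w.zmodRepr : ℚ_[ℓ]) := by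
    push_cast [hw]
    rfl
  rw [PadicInt.norm_def, h3] at h2
  simpa using h2

lemma nat_norm_one (a b : ℕ) (ha : a < ℓ) (hb : b < ℓ) (hne : a ≠ b) :
    ‖((a:ℚ_[ℓ]) - b)‖ = 1 := by
  have h1 : ((a:ℚ_[ℓ]) - b) = (((a:ℤ) - b : ℤ) : ℚ_[ℓ]) := by push_cast; ring
  rw [h1]
  have hle := Padic.norm_int_le_one (p := ℓ) ((a:ℤ) - b)
  rcases lt_or_eq_of_le hle with h | h
  · exfalso
    rw [Padic.norm_intCast_lt_one_iff] at h
    have h5 : ℓ ∣ ((a:ℤ) - b).natAbs := by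
      rw [← Int.natAbs_natCast ℓ, Int.natAbs_dvd_natAbs]; exact h
    have h6 : ((a:ℤ) - b).natAbs ≠ 0 := by omega
    have := Nat.le_of_dvd (Nat.pos_of_ne_zero h6) h5
    omega
  · exact h

lemma norm_one_of (z : ℚ_[ℓ]) (h1 : ‖z‖ ≤ 1) (h2 : ¬ ‖z‖ ≤ (ℓ:ℝ)⁻¹) : ‖z‖ = 1 := by
  have h3 := (Padic.norm_le_pow_iff_norm_lt_pow_add_one z (-1)).2
  have h4 : ¬ ‖z‖ < (ℓ:ℝ)^((-1:ℤ)+1) := fun hc => h2 (by simpa [zpow_neg_one] using h3 hc)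
  simp only [neg_add_cancel, zpow_zero] at h4
  linarith

lemma sub_le_of (c : ℝ) (x y : ℚ_[ℓ]) (hx : ‖x‖ ≤ c) (hy : ‖y‖ ≤ c) : ‖x - y‖ ≤ c := by
  rw [sub_eq_add_neg]
  exact le_trans (Padic.nonarchimedean _ _) (max_le hx (by rwa [norm_neg]))

lemma add_le_of (c : ℝ) (x y : ℚ_[ℓ]) (hx : ‖x‖ ≤ c) (hy : ‖y‖ ≤ c) : ‖x + y‖ ≤ c :=
  le_trans (Padic.nonarchimedean _ _) (max_le hx hy)

lemma nat_norm_le (a : ℕ) : ‖(a:ℚ_[ℓ])‖ ≤ 1 := by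
  have := Padic.norm_int_le_one (p := ℓ) (a:ℤ)
  simpa using this

lemma fin2 (j : Fin 2) : j = 0 ∨ j = 1 := by
  fin_cases j
  · exact Or.inl rfl
  · exact Or.inr rfl

lemma mul_le_of (c : ℝ) (x y : ℚ_[ℓ]) (hx : ‖x‖ ≤ c) (hy : ‖y‖ ≤ 1) : ‖x*y‖ ≤ c := by
  rw [norm_mul]
  exact (mul_le_mul hx hy (norm_nonneg _) (le_trans (norm_nonneg _) hx)).trans_eq (mul_one c)

lemma mul_le_of' (c : ℝ) (x y : ℚ_[ℓ]) (hx : ‖x‖ ≤ 1) (hy : ‖y‖ ≤ c) : ‖x*y‖ ≤ c := by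
  rw [mul_comm]; exact mul_le_of ℓ c y x hy hx

lemma ell_pos : (0:ℝ) < ℓ := by
  have := (Fact.out : ℓ.Prime).two_le
  have : (2:ℝ) ≤ ℓ := by exact_mod_cast this
  linarith

lemma eps_lt_one : (ℓ:ℝ)⁻¹ < 1 := by
  have := (Fact.out : ℓ.Prime).two_le
  have h2 : (2:ℝ) ≤ ℓ := by exact_mod_cast this
  rw [inv_lt_one_iff₀]; right; linarith

lemma eps_le_one : (ℓ:ℝ)⁻¹ ≤ 1 := le_of_lt (eps_lt_one ℓ)

lemma q_norm : ‖((ℓ:ℚ_[ℓ]))‖ = (ℓ:ℝ)⁻¹ := Padic.norm_p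

lemma q_ne : ((ℓ:ℚ_[ℓ])) ≠ 0 := by
  intro h
  have := q_norm ℓ
  rw [h, norm_zero] at this
  have := ell_pos ℓ
  have : (0:ℝ) < (ℓ:ℝ)⁻¹ := by positivity
  linarith

lemma mul_inv_norm_le (z : ℚ_[ℓ]) : ‖z * ((ℓ:ℚ_[ℓ]))⁻¹‖ ≤ 1 ↔ ‖z‖ ≤ (ℓ:ℝ)⁻¹ := by
  rw [norm_mul, norm_inv, q_norm, inv_inv]
  have hl := ell_pos ℓ
  constructor
  · intro h
    rw [← le_div_iff₀ hl] at h
    simpa [one_div] using h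
  · intro h
    rw [← le_div_iff₀ hl, one_div]
    exact h

/-! ### The sets -/

def SaSet (a : ℕ) : Set (Matrix (Fin 2) (Fin 2) ℚ_[ℓ]) :=
  {x | IsUnit x ∧ ‖x 0 1‖ ≤ 1 ∧ ‖x 1 1‖ ≤ 1 ∧
    ‖x 0 0 - (a:ℚ_[ℓ]) * x 0 1‖ ≤ (ℓ:ℝ)⁻¹ ∧ ‖x 1 0 - (a:ℚ_[ℓ]) * x 1 1‖ ≤ (ℓ:ℝ)⁻¹}

def SinfSet : Set (Matrix (Fin 2) (Fin 2) ℚ_[ℓ]) :=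
  {x | IsUnit x ∧ ‖x 0 0‖ ≤ 1 ∧ ‖x 1 0‖ ≤ 1 ∧ ‖x 0 1‖ ≤ (ℓ:ℝ)⁻¹ ∧ ‖x 1 1‖ ≤ (ℓ:ℝ)⁻¹}

def TSet : Set (Matrix (Fin 2) (Fin 2) ℚ_[ℓ]) :=
  {x | IsUnit x ∧ ∀ i j, ‖x i j‖ ≤ (ℓ:ℝ)⁻¹}

/-! ### Image characterizations -/

lemma mem_image_iff (g h : Matrix (Fin 2) (Fin 2) ℚ_[ℓ]) (hg1 : g * h = 1) (hg2 : h * g = 1)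
    (x : Matrix (Fin 2) (Fin 2) ℚ_[ℓ]) :
    x ∈ (fun y => y * g) '' Mint ℓ ↔ IsUnit x ∧ ∀ i j, ‖(x * h) i j‖ ≤ 1 := by
  constructor
  · rintro ⟨m, ⟨hm, hmu⟩, rfl⟩
    refine ⟨hmu.mul ⟨⟨g,h,hg1,hg2⟩,rfl⟩, ?_⟩
    simpa only [mul_assoc, hg1, mul_one] using hm
  · rintro ⟨hu, hint⟩
    exact ⟨x * h, ⟨hint, hu.mul ⟨⟨h,g,hg2,hg1⟩,rfl⟩⟩, by
      simp only [mul_assoc, hg2, mul_one]⟩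

lemma Sa_eq (a : ℕ) :
    SaSet ℓ a = (fun y => y * !![(ℓ:ℚ_[ℓ]), 0; (a:ℚ_[ℓ]), 1]) '' Mint ℓ := by
  have hqne := q_ne ℓ
  have hprod1 : !![(ℓ:ℚ_[ℓ]),0;(a:ℚ_[ℓ]),1] * !![((ℓ:ℚ_[ℓ]))⁻¹,0;-(a:ℚ_[ℓ])*((ℓ:ℚ_[ℓ]))⁻¹,1]
      = 1 := by
    rw [Matrix.mul_fin_two, show (1 : Matrix (Fin 2) (Fin 2) ℚ_[ℓ]) = !![1,0;0,1] from
      Matrix.one_fin_two]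
    congr 1 <;> field_simp <;> simp [hqne]
  have hprod2 : !![((ℓ:ℚ_[ℓ]))⁻¹,0;-(a:ℚ_[ℓ])*((ℓ:ℚ_[ℓ]))⁻¹,1] * !![(ℓ:ℚ_[ℓ]),0;(a:ℚ_[ℓ]),1]
      = 1 := by
    rw [Matrix.mul_fin_two, show (1 : Matrix (Fin 2) (Fin 2) ℚ_[ℓ]) = !![1,0;0,1] from
      Matrix.one_fin_two]
    congr 1 <;> field_simp <;> simp [hqne]
  ext x
  rw [mem_image_iff ℓ _ _ hprod1 hprod2 x]
  have e0 : ∀ i, (x * !![((ℓ:ℚ_[ℓ]))⁻¹,0;-(a:ℚ_[ℓ])*((ℓ:ℚ_[ℓ]))⁻¹,1]) i 0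
      = (x i 0 - (a:ℚ_[ℓ]) * x i 1) * ((ℓ:ℚ_[ℓ]))⁻¹ := fun i => by
    simp [Matrix.mul_apply, Fin.sum_univ_two]; ring
  have e1 : ∀ i, (x * !![((ℓ:ℚ_[ℓ]))⁻¹,0;-(a:ℚ_[ℓ])*((ℓ:ℚ_[ℓ]))⁻¹,1]) i 1 = x i 1 := fun i => by
    simp [Matrix.mul_apply, Fin.sum_univ_two]
  constructor
  · rintro ⟨hu,h1,h2,h3,h4⟩
    refine ⟨hu, fun i j => ?_⟩
    rcases fin2 i with rfl | rfl <;> rcases fin2 j with rfl | rfl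
    · rw [e0]; exact (mul_inv_norm_le ℓ _).2 h3
    · rw [e1]; exact h1
    · rw [e0]; exact (mul_inv_norm_le ℓ _).2 h4
    · rw [e1]; exact h2
  · rintro ⟨hu, h⟩
    refine ⟨hu, ?_, ?_, ?_, ?_⟩
    · have := h 0 1; rwa [e1] at this
    · have := h 1 1; rwa [e1] at this
    · have := h 0 0; rw [e0] at this; exact (mul_inv_norm_le ℓ _).1 this
    · have := h 1 0; rw [e0] at this; exact (mul_inv_norm_le ℓ _).1 this

lemma Sinf_eq :
    SinfSet ℓ = (fun y => y * !![0, (ℓ:ℚ_[ℓ]); 1, 0]) '' Mint ℓ := by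
  have hqne := q_ne ℓ
  have hprod1 : !![0,(ℓ:ℚ_[ℓ]);1,0] * !![0,1;((ℓ:ℚ_[ℓ]))⁻¹,0] = 1 := by
    rw [Matrix.mul_fin_two, show (1 : Matrix (Fin 2) (Fin 2) ℚ_[ℓ]) = !![1,0;0,1] from
      Matrix.one_fin_two]
    congr 1 <;> field_simp <;> simp [hqne]
  have hprod2 : !![0,1;((ℓ:ℚ_[ℓ]))⁻¹,0] * !![0,(ℓ:ℚ_[ℓ]);1,0] = 1 := by
    rw [Matrix.mul_fin_two, show (1 : Matrix (Fin 2) (Fin 2) ℚ_[ℓ]) = !![1,0;0,1] from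
      Matrix.one_fin_two]
    congr 1 <;> field_simp <;> simp [hqne]
  ext x
  rw [mem_image_iff ℓ _ _ hprod1 hprod2 x]
  have e0 : ∀ i, (x * !![0,1;((ℓ:ℚ_[ℓ]))⁻¹,0]) i 0 = x i 1 * ((ℓ:ℚ_[ℓ]))⁻¹ := fun i => by
    simp [Matrix.mul_apply, Fin.sum_univ_two]
  have e1 : ∀ i, (x * !![0,1;((ℓ:ℚ_[ℓ]))⁻¹,0]) i 1 = x i 0 := fun i => by
    simp [Matrix.mul_apply, Fin.sum_univ_two]
  constructor
  · rintro ⟨hu,h1,h2,h3,h4⟩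
    refine ⟨hu, fun i j => ?_⟩
    rcases fin2 i with rfl | rfl <;> rcases fin2 j with rfl | rfl
    · rw [e0]; exact (mul_inv_norm_le ℓ _).2 h3
    · rw [e1]; exact h1
    · rw [e0]; exact (mul_inv_norm_le ℓ _).2 h4
    · rw [e1]; exact h2
  · rintro ⟨hu, h⟩
    refine ⟨hu, ?_, ?_, ?_, ?_⟩
    · have := h 0 1; rwa [e1] at this
    · have := h 1 1; rwa [e1] at this
    · have := h 0 0; rw [e0] at this; exact (mul_inv_norm_le ℓ _).1 this
    · have := h 1 0; rw [e0] at this; exact (mul_inv_norm_le ℓ _).1 this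

lemma tDiag_two : tDiag ℓ 2 = Matrix.diagonal (fun _ => (ℓ:ℚ_[ℓ])) := by
  unfold tDiag
  congr 1
  funext i
  simp [i.isLt]

lemma tDiag_one : tDiag ℓ 1 = !![(ℓ:ℚ_[ℓ]), 0; 0, 1] := by
  ext i j
  fin_cases i <;> fin_cases j <;> simp [tDiag, Matrix.diagonal]

lemma T_eq : TSet ℓ = Mt ℓ 2 := by
  have hqne := q_ne ℓ
  have hprod1 : Matrix.diagonal (fun _ : Fin 2 => (ℓ:ℚ_[ℓ]))
      * Matrix.diagonal (fun _ => ((ℓ:ℚ_[ℓ]))⁻¹) = 1 := by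
    rw [Matrix.diagonal_mul_diagonal]
    simp [mul_inv_cancel₀ hqne]
  have hprod2 : Matrix.diagonal (fun _ : Fin 2 => ((ℓ:ℚ_[ℓ]))⁻¹)
      * Matrix.diagonal (fun _ => (ℓ:ℚ_[ℓ])) = 1 := by
    rw [Matrix.diagonal_mul_diagonal]
    simp [inv_mul_cancel₀ hqne]
  unfold Mt
  rw [tDiag_two]
  ext x
  rw [mem_image_iff ℓ _ _ hprod1 hprod2 x]
  simp only [Matrix.mul_diagonal]
  exact and_congr Iff.rfl (forall₂_congr fun i j => (mul_inv_norm_le ℓ _).symm)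

/-! ### Inclusions -/

lemma T_subset_Mge : TSet ℓ ⊆ MintGeOne ℓ := by
  rintro x ⟨hu, h⟩
  refine ⟨⟨fun i j => le_trans (h i j) (eps_le_one ℓ), hu⟩, ?_⟩
  rw [Matrix.det_fin_two]
  exact sub_le_of ℓ _ _ _
    (mul_le_of ℓ _ _ _ (h 0 0) (le_trans (h 1 1) (eps_le_one ℓ)))
    (mul_le_of ℓ _ _ _ (h 0 1) (le_trans (h 1 0) (eps_le_one ℓ)))

lemma Sa_subset_Mge (a : ℕ) : SaSet ℓ a ⊆ MintGeOne ℓ := by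
  rintro x ⟨hu, h1, h2, h3, h4⟩
  have hx00 : ‖x 0 0‖ ≤ 1 := by
    have e : x 0 0 = (x 0 0 - (a:ℚ_[ℓ]) * x 0 1) + (a:ℚ_[ℓ]) * x 0 1 := by ring
    rw [e]
    exact add_le_of ℓ _ _ _ (le_trans h3 (eps_le_one ℓ))
      (mul_le_of' ℓ _ _ _ (nat_norm_le ℓ a) h1)
  have hx10 : ‖x 1 0‖ ≤ 1 := by
    have e : x 1 0 = (x 1 0 - (a:ℚ_[ℓ]) * x 1 1) + (a:ℚ_[ℓ]) * x 1 1 := by ring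
    rw [e]
    exact add_le_of ℓ _ _ _ (le_trans h4 (eps_le_one ℓ))
      (mul_le_of' ℓ _ _ _ (nat_norm_le ℓ a) h2)
  refine ⟨⟨fun i j => by
    rcases fin2 i with rfl | rfl <;> rcases fin2 j with rfl | rfl <;> assumption, hu⟩, ?_⟩
  rw [Matrix.det_fin_two]
  have e : x 0 0 * x 1 1 - x 0 1 * x 1 0
      = (x 0 0 - (a:ℚ_[ℓ]) * x 0 1) * x 1 1 - (x 1 0 - (a:ℚ_[ℓ]) * x 1 1) * x 0 1 := by ring
  rw [e]
  exact sub_le_of ℓ _ _ _ (mul_le_of ℓ _ _ _ h3 h2) (mul_le_of ℓ _ _ _ h4 h1)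

lemma Sinf_subset_Mge : SinfSet ℓ ⊆ MintGeOne ℓ := by
  rintro x ⟨hu, h1, h2, h3, h4⟩
  refine ⟨⟨fun i j => by
    rcases fin2 i with rfl | rfl <;> rcases fin2 j with rfl | rfl <;>
      first
        | assumption
        | exact le_trans (by assumption) (eps_le_one ℓ), hu⟩, ?_⟩
  rw [Matrix.det_fin_two]
  exact sub_le_of ℓ _ _ _ (mul_le_of' ℓ _ _ _ h1 h4) (mul_le_of ℓ _ _ _ h3 h2)

lemma T_subset_Sa (a : ℕ) : TSet ℓ ⊆ SaSet ℓ a := by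
  rintro x ⟨hu, h⟩
  refine ⟨hu, le_trans (h 0 1) (eps_le_one ℓ), le_trans (h 1 1) (eps_le_one ℓ), ?_, ?_⟩
  · exact sub_le_of ℓ _ _ _ (h 0 0) (mul_le_of' ℓ _ _ _ (nat_norm_le ℓ a) (h 0 1))
  · exact sub_le_of ℓ _ _ _ (h 1 0) (mul_le_of' ℓ _ _ _ (nat_norm_le ℓ a) (h 1 1))

lemma T_subset_Sinf : TSet ℓ ⊆ SinfSet ℓ := by
  rintro x ⟨hu, h⟩
  exact ⟨hu, le_trans (h 0 0) (eps_le_one ℓ), le_trans (h 1 0) (eps_le_one ℓ), h 0 1, h 1 1⟩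

/-! ### Existence of the residue -/

lemma exists_row (u0 u1 v0 v1 : ℚ_[ℓ]) (hu1 : ‖u1‖ ≤ 1) (hv0 : ‖v0‖ ≤ 1)
    (hd : ‖u0*v1 - u1*v0‖ ≤ (ℓ:ℝ)⁻¹) (hv1 : ‖v1‖ = 1) :
    ∃ a : ℕ, a < ℓ ∧ ‖u0 - a*u1‖ ≤ (ℓ:ℝ)⁻¹ ∧ ‖v0 - a*v1‖ ≤ (ℓ:ℝ)⁻¹ := by
  have hv1ne : v1 ≠ 0 := by
    intro h; rw [h, norm_zero] at hv1; norm_num at hv1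
  have hz : ‖v0 * v1⁻¹‖ ≤ 1 := by
    rw [norm_mul, norm_inv, hv1, inv_one, mul_one]; exact hv0
  obtain ⟨a, ha, haz⟩ := res_exists ℓ (v0 * v1⁻¹) hz
  have hv0a : ‖v0 - (a:ℚ_[ℓ])*v1‖ ≤ (ℓ:ℝ)⁻¹ := by
    have e2 : v0 - (a:ℚ_[ℓ])*v1 = (v0 * v1⁻¹ - (a:ℚ_[ℓ])) * v1 := by
      field_simp
    rw [e2, norm_mul, hv1, mul_one]
    exact haz
  refine ⟨a, ha, ?_, hv0a⟩
  have e : v1 * (u0 - (a:ℚ_[ℓ])*u1) = (u0*v1 - u1*v0) + u1*(v0 - (a:ℚ_[ℓ])*v1) := by ring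
  have hb : ‖v1 * (u0 - (a:ℚ_[ℓ])*u1)‖ ≤ (ℓ:ℝ)⁻¹ := by
    rw [e]
    exact add_le_of ℓ _ _ _ hd (mul_le_of' ℓ _ _ _ hu1 hv0a)
  rwa [norm_mul, hv1, one_mul] at hb

/-! ### The pointwise counting identity -/

lemma key_count (f : Matrix (Fin 2) (Fin 2) ℚ_[ℓ] → ℂ) (x : Matrix (Fin 2) (Fin 2) ℚ_[ℓ]) :
    Set.indicator (MintGeOne ℓ) f x + (ℓ:ℂ) * Set.indicator (TSet ℓ) f x
      = (∑ a ∈ Finset.range ℓ, Set.indicator (SaSet ℓ a) f x)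
        + Set.indicator (SinfSet ℓ) f x := by
  by_cases hM : x ∈ MintGeOne ℓ
  · by_cases hT : x ∈ TSet ℓ
    · rw [Set.indicator_of_mem hM, Set.indicator_of_mem hT,
        Set.indicator_of_mem (T_subset_Sinf ℓ hT),
        Finset.sum_congr rfl (fun a _ => Set.indicator_of_mem (T_subset_Sa ℓ a hT) f),
        Finset.sum_const, Finset.card_range, nsmul_eq_mul]
      ring
    · obtain ⟨⟨hxi, hxu⟩, hxd⟩ := id hM
      have hnotall : ¬ ∀ i j, ‖x i j‖ ≤ (ℓ:ℝ)⁻¹ := fun h => hT ⟨hxu, h⟩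
      by_cases hcol : ‖x 0 1‖ ≤ (ℓ:ℝ)⁻¹ ∧ ‖x 1 1‖ ≤ (ℓ:ℝ)⁻¹
      · -- second column divisible by ℓ : `x ∈ S∞` and in no `S_a`
        have hSinf : x ∈ SinfSet ℓ := ⟨hxu, hxi 0 0, hxi 1 0, hcol.1, hcol.2⟩
        have hSa : ∀ a : ℕ, x ∉ SaSet ℓ a := by
          rintro a ⟨-, -, -, h3, h4⟩
          apply hnotall
          intro i j
          rcases fin2 i with rfl | rfl <;> rcases fin2 j with rfl | rfl
          · have e : x 0 0 = (x 0 0 - (a:ℚ_[ℓ]) * x 0 1) + (a:ℚ_[ℓ]) * x 0 1 := by ring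
            rw [e]
            exact add_le_of ℓ _ _ _ h3 (mul_le_of' ℓ _ _ _ (nat_norm_le ℓ a) hcol.1)
          · exact hcol.1
          · have e : x 1 0 = (x 1 0 - (a:ℚ_[ℓ]) * x 1 1) + (a:ℚ_[ℓ]) * x 1 1 := by ring
            rw [e]
            exact add_le_of ℓ _ _ _ h4 (mul_le_of' ℓ _ _ _ (nat_norm_le ℓ a) hcol.2)
          · exact hcol.2
        rw [Set.indicator_of_mem hM, Set.indicator_of_notMem hT,
          Set.indicator_of_mem hSinf,
          Finset.sum_eq_zero (fun a _ => Set.indicator_of_notMem (hSa a) f)]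
        ring
      · -- the second column is nonzero mod ℓ : exactly one `S_a`
        have hone : ‖x 0 1‖ = 1 ∨ ‖x 1 1‖ = 1 := by
          rcases not_and_or.1 hcol with h | h
          · exact Or.inl (norm_one_of ℓ _ (hxi 0 1) h)
          · exact Or.inr (norm_one_of ℓ _ (hxi 1 1) h)
        obtain ⟨a₀, ha₀, h3, h4⟩ :
            ∃ a : ℕ, a < ℓ ∧ ‖x 0 0 - (a:ℚ_[ℓ])*x 0 1‖ ≤ (ℓ:ℝ)⁻¹
              ∧ ‖x 1 0 - (a:ℚ_[ℓ])*x 1 1‖ ≤ (ℓ:ℝ)⁻¹ := by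
          rcases hone with h | h
          · obtain ⟨a, ha, hA, hB⟩ := exists_row ℓ (x 1 0) (x 1 1) (x 0 0) (x 0 1)
              (hxi 1 1) (hxi 0 0) (by
                have e : x 1 0 * x 0 1 - x 1 1 * x 0 0 = -(x.det) := by
                  rw [Matrix.det_fin_two]; ring
                rw [e, norm_neg]; exact hxd) h
            exact ⟨a, ha, hB, hA⟩
          · obtain ⟨a, ha, hA, hB⟩ := exists_row ℓ (x 0 0) (x 0 1) (x 1 0) (x 1 1)
              (hxi 0 1) (hxi 1 0) (by
                have e : x 0 0 * x 1 1 - x 0 1 * x 1 0 = x.det := (Matrix.det_fin_two x).symm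
                rw [e]; exact hxd) h
            exact ⟨a, ha, hA, hB⟩
        have hmemSa : x ∈ SaSet ℓ a₀ := ⟨hxu, hxi 0 1, hxi 1 1, h3, h4⟩
        have huniq : ∀ b : ℕ, b < ℓ → b ≠ a₀ → x ∉ SaSet ℓ b := by
          rintro b hb hne ⟨-, -, -, g3, g4⟩
          have key1 : ∀ (w0 w1 : ℚ_[ℓ]), ‖w0 - (a₀:ℚ_[ℓ])*w1‖ ≤ (ℓ:ℝ)⁻¹ →
              ‖w0 - (b:ℚ_[ℓ])*w1‖ ≤ (ℓ:ℝ)⁻¹ → ‖w1‖ ≤ (ℓ:ℝ)⁻¹ := by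
            intro w0 w1 hA hB
            have e : ((a₀:ℚ_[ℓ]) - b) * w1 = (w0 - (b:ℚ_[ℓ])*w1) - (w0 - (a₀:ℚ_[ℓ])*w1) := by
              ring
            have h5 : ‖((a₀:ℚ_[ℓ]) - b) * w1‖ ≤ (ℓ:ℝ)⁻¹ := by
              rw [e]; exact sub_le_of ℓ _ _ _ hB hA
            rwa [norm_mul, nat_norm_one ℓ a₀ b ha₀ hb (fun h => hne h.symm), one_mul] at h5
          have k1 := key1 (x 0 0) (x 0 1) h3 g3
          have k2 := key1 (x 1 0) (x 1 1) h4 g4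
          have hε := eps_lt_one ℓ
          rcases hone with h | h
          · rw [h] at k1; linarith
          · rw [h] at k2; linarith
        have hSinf' : x ∉ SinfSet ℓ := by
          rintro ⟨-, -, -, g1, g2⟩
          have hε := eps_lt_one ℓ
          rcases hone with h | h
          · rw [h] at g1; linarith
          · rw [h] at g2; linarith
        rw [Set.indicator_of_mem hM, Set.indicator_of_notMem hT,
          Set.indicator_of_notMem hSinf',
          Finset.sum_eq_single_of_mem a₀ (Finset.mem_range.2 ha₀)
            (fun b hb hne => Set.indicator_of_notMem
              (huniq b (Finset.mem_range.1 hb) hne) f),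
          Set.indicator_of_mem hmemSa]
        ring
  · have hT : x ∉ TSet ℓ := fun h => hM (T_subset_Mge ℓ h)
    have hSa : ∀ a : ℕ, x ∉ SaSet ℓ a := fun a h => hM (Sa_subset_Mge ℓ a h)
    have hSinf : x ∉ SinfSet ℓ := fun h => hM (Sinf_subset_Mge ℓ h)
    rw [Set.indicator_of_notMem hM, Set.indicator_of_notMem hT,
      Set.indicator_of_notMem hSinf,
      Finset.sum_eq_zero (fun a _ => Set.indicator_of_notMem (hSa a) f)]
    ring

/-! ### Translation invariance of the set integrals -/

variable [MeasurableSpace (Matrix (Fin 2) (Fin 2) ℚ_[ℓ])]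
  [BorelSpace (Matrix (Fin 2) (Fin 2) ℚ_[ℓ])]

lemma setIntegral_translate (ν : Measure (Matrix (Fin 2) (Fin 2) ℚ_[ℓ]))
    (hinv : ∀ g : Matrix (Fin 2) (Fin 2) ℚ_[ℓ], IsUnit g →
      Measure.map (fun x => x * g) ν = ν)
    (f : Matrix (Fin 2) (Fin 2) ℚ_[ℓ] → ℂ)
    (hK : ∀ k : Matrix (Fin 2) (Fin 2) ℚ_[ℓ], (∀ i j, ‖k i j‖ ≤ 1) → ‖k.det‖ = 1 →
      ∀ x, f (x * k) = f x)
    (k : Matrix (Fin 2) (Fin 2) ℚ_[ℓ]) (hki : ∀ i j, ‖k i j‖ ≤ 1) (hdet : ‖k.det‖ = 1)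
    (A : Set (Matrix (Fin 2) (Fin 2) ℚ_[ℓ])) :
    ∫ x in (fun y => y * k) '' A, f x ∂ν = ∫ x in A, f x ∂ν := by
  have hd0 : k.det ≠ 0 := fun h => by simp [h] at hdet
  have hku : IsUnit k := (Matrix.isUnit_iff_isUnit_det k).2 (isUnit_iff_ne_zero.2 hd0)
  have h1 : k * k⁻¹ = 1 := Matrix.mul_nonsing_inv k (isUnit_iff_ne_zero.2 hd0)
  have h2 : k⁻¹ * k = 1 := Matrix.nonsing_inv_mul k (isUnit_iff_ne_zero.2 hd0)
  let φ : Homeomorph (Matrix (Fin 2) (Fin 2) ℚ_[ℓ]) (Matrix (Fin 2) (Fin 2) ℚ_[ℓ]) :=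
    { toFun := fun y => y * k
      invFun := fun y => y * k⁻¹
      left_inv := fun y => by simp only []; rw [mul_assoc, h1, mul_one]
      right_inv := fun y => by simp only []; rw [mul_assoc, h2, mul_one]
      continuous_toFun := continuous_id.matrix_mul continuous_const
      continuous_invFun := continuous_id.matrix_mul continuous_const }
  have hemb : MeasurableEmbedding (fun y => y * k) := φ.measurableEmbedding
  have hinj : Function.Injective (fun y : Matrix (Fin 2) (Fin 2) ℚ_[ℓ] => y * k) := by
    intro a b hab
    have := congrArg (fun y => y * k⁻¹) hab
    simpa only [mul_assoc, h1, mul_one] using this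
  have step1 : ∫ x in (fun y => y * k) '' A, f x ∂ν
      = ∫ x in (fun y => y * k) ⁻¹' ((fun y => y * k) '' A), f (x * k) ∂ν := by
    conv_lhs => rw [← hinv k hku]
    exact hemb.setIntegral_map f _
  rw [step1, Set.preimage_image_eq A hinj]
  apply integral_congr_ae
  filter_upwards with x using hK k hki hdet x

end Statement18Aux

open Statement18Aux

/-- Inclusion–exclusion for `n = 2`: for a right `GL₂(ℤ_ℓ)`-invariant integrable function `f`
on `GL₂(ℚ_ℓ)` and `μ_f(S) = ∫_S f` with respect to a (right-invariant) Haar measure,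
`μ_f(M^{≥1}) = (ℓ+1)·μ_f(M t₁) - ℓ·μ_f(M t₂)`. -/
theorem statement18 (ℓ : ℕ) [Fact ℓ.Prime]
    [MeasurableSpace (Matrix (Fin 2) (Fin 2) ℚ_[ℓ])]
    [BorelSpace (Matrix (Fin 2) (Fin 2) ℚ_[ℓ])]
    (ν : Measure (Matrix (Fin 2) (Fin 2) ℚ_[ℓ]))
    (hinv : ∀ g : Matrix (Fin 2) (Fin 2) ℚ_[ℓ], IsUnit g →
      Measure.map (fun x => x * g) ν = ν)
    (f : Matrix (Fin 2) (Fin 2) ℚ_[ℓ] → ℂ)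
    (hf : Integrable f ν)
    (hK : ∀ k : Matrix (Fin 2) (Fin 2) ℚ_[ℓ], (∀ i j, ‖k i j‖ ≤ 1) → ‖k.det‖ = 1 →
      ∀ x, f (x * k) = f x) :
    (∫ x in MintGeOne ℓ, f x ∂ν)
      = ((ℓ : ℂ) + 1) * (∫ x in Mt ℓ 1, f x ∂ν) - (ℓ : ℂ) * (∫ x in Mt ℓ 2, f x ∂ν) := by
  classical
  -- measurability of the sets involved
  have hentry : ∀ i j : Fin 2, Continuous fun x : Matrix (Fin 2) (Fin 2) ℚ_[ℓ] => x i j :=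
    fun i j => (continuous_apply j).comp (continuous_apply i)
  have hU : MeasurableSet {x : Matrix (Fin 2) (Fin 2) ℚ_[ℓ] | IsUnit x} := by
    have he : {x : Matrix (Fin 2) (Fin 2) ℚ_[ℓ] | IsUnit x} = {x | ¬ x.det = 0} := by
      ext x
      simp [Matrix.isUnit_iff_isUnit_det, isUnit_iff_ne_zero]
    rw [he]
    exact (isClosed_eq continuous_id.matrix_det continuous_const).measurableSet.compl
  have hnorm : ∀ (i j : Fin 2) (r : ℝ),
      MeasurableSet {x : Matrix (Fin 2) (Fin 2) ℚ_[ℓ] | ‖x i j‖ ≤ r} :=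
    fun i j r => (isClosed_le (hentry i j).norm continuous_const).measurableSet
  have hnorm2 : ∀ (c : ℚ_[ℓ]) (i j i' j' : Fin 2) (r : ℝ),
      MeasurableSet {x : Matrix (Fin 2) (Fin 2) ℚ_[ℓ] | ‖x i j - c * x i' j'‖ ≤ r} :=
    fun c i j i' j' r => (isClosed_le
      ((hentry i j).sub (continuous_const.mul (hentry i' j'))).norm
      continuous_const).measurableSet
  have hmSa : ∀ a : ℕ, MeasurableSet (SaSet ℓ a) := by
    intro a
    have he : SaSet ℓ a = {x : Matrix (Fin 2) (Fin 2) ℚ_[ℓ] | IsUnit x}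
        ∩ ({x | ‖x 0 1‖ ≤ 1} ∩ ({x | ‖x 1 1‖ ≤ 1}
        ∩ ({x | ‖x 0 0 - (a:ℚ_[ℓ]) * x 0 1‖ ≤ (ℓ:ℝ)⁻¹}
        ∩ {x | ‖x 1 0 - (a:ℚ_[ℓ]) * x 1 1‖ ≤ (ℓ:ℝ)⁻¹}))) := by
      ext x
      simp only [SaSet, Set.mem_setOf_eq, Set.mem_inter_iff]
    rw [he]
    exact hU.inter ((hnorm 0 1 1).inter ((hnorm 1 1 1).inter
      ((hnorm2 _ 0 0 0 1 _).inter (hnorm2 _ 1 0 1 1 _))))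
  have hmSinf : MeasurableSet (SinfSet ℓ) := by
    have he : SinfSet ℓ = {x : Matrix (Fin 2) (Fin 2) ℚ_[ℓ] | IsUnit x}
        ∩ ({x | ‖x 0 0‖ ≤ 1} ∩ ({x | ‖x 1 0‖ ≤ 1}
        ∩ ({x | ‖x 0 1‖ ≤ (ℓ:ℝ)⁻¹} ∩ {x | ‖x 1 1‖ ≤ (ℓ:ℝ)⁻¹}))) := by
      ext x
      simp only [SinfSet, Set.mem_setOf_eq, Set.mem_inter_iff]
    rw [he]
    exact hU.inter ((hnorm 0 0 1).inter ((hnorm 1 0 1).inter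
      ((hnorm 0 1 _).inter (hnorm 1 1 _))))
  have hmT : MeasurableSet (TSet ℓ) := by
    have he : TSet ℓ = {x : Matrix (Fin 2) (Fin 2) ℚ_[ℓ] | IsUnit x}
        ∩ ⋂ i, ⋂ j, {x | ‖x i j‖ ≤ (ℓ:ℝ)⁻¹} := by
      ext x
      simp only [TSet, Set.mem_setOf_eq, Set.mem_inter_iff, Set.mem_iInter]
    rw [he]
    exact hU.inter (MeasurableSet.iInter fun i => MeasurableSet.iInter fun j => hnorm i j _)
  have hmM : MeasurableSet (MintGeOne ℓ) := by
    have he : MintGeOne ℓ = ((⋂ i, ⋂ j, {x : Matrix (Fin 2) (Fin 2) ℚ_[ℓ] | ‖x i j‖ ≤ 1})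
        ∩ {x | IsUnit x}) ∩ {x | ‖x.det‖ ≤ (ℓ:ℝ)⁻¹} := by
      ext x
      simp only [MintGeOne, Mint, Set.mem_setOf_eq, Set.mem_inter_iff, Set.mem_iInter,
        Set.mem_sep_iff]
    rw [he]
    exact ((MeasurableSet.iInter fun i => MeasurableSet.iInter fun j =>
      hnorm i j 1).inter hU).inter
      (isClosed_le continuous_id.matrix_det.norm continuous_const).measurableSet
  -- integrabilities
  have hIM : Integrable (Set.indicator (MintGeOne ℓ) f) ν := hf.indicator hmM
  have hIT : Integrable (Set.indicator (TSet ℓ) f) ν := hf.indicator hmT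
  have hISa : ∀ a : ℕ, Integrable (Set.indicator (SaSet ℓ a) f) ν :=
    fun a => hf.indicator (hmSa a)
  have hISinf : Integrable (Set.indicator (SinfSet ℓ) f) ν := hf.indicator hmSinf
  -- integrate the pointwise counting identity
  have big : (∫ x, Set.indicator (MintGeOne ℓ) f x ∂ν)
      + (ℓ:ℂ) * ∫ x, Set.indicator (TSet ℓ) f x ∂ν
      = (∑ a ∈ Finset.range ℓ, ∫ x, Set.indicator (SaSet ℓ a) f x ∂ν)
        + ∫ x, Set.indicator (SinfSet ℓ) f x ∂ν := by
    have e1 : ∫ x, (Set.indicator (MintGeOne ℓ) f x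
        + (ℓ:ℂ) * Set.indicator (TSet ℓ) f x) ∂ν
        = (∫ x, Set.indicator (MintGeOne ℓ) f x ∂ν)
          + (ℓ:ℂ) * ∫ x, Set.indicator (TSet ℓ) f x ∂ν := by
      rw [integral_add hIM (hIT.const_mul _), integral_const_mul]
    have e2 : ∫ x, ((∑ a ∈ Finset.range ℓ, Set.indicator (SaSet ℓ a) f x)
        + Set.indicator (SinfSet ℓ) f x) ∂ν
        = (∑ a ∈ Finset.range ℓ, ∫ x, Set.indicator (SaSet ℓ a) f x ∂ν)
          + ∫ x, Set.indicator (SinfSet ℓ) f x ∂ν := by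
      rw [integral_add (integrable_finset_sum _ fun a _ => hISa a) hISinf,
        integral_finset_sum _ fun a _ => hISa a]
    rw [← e1, ← e2]
    exact integral_congr_ae (Filter.Eventually.of_forall fun x => key_count ℓ f x)
  rw [integral_indicator hmM, integral_indicator hmT, integral_indicator hmSinf] at big
  simp only [integral_indicator (hmSa _)] at big
  -- identify all translated integrals with `∫ Mt ℓ 1`
  have hSa_int : ∀ a : ℕ, (∫ x in SaSet ℓ a, f x ∂ν) = ∫ x in Mt ℓ 1, f x ∂ν := by
    intro a
    have himg : SaSet ℓ a = (fun y => y * !![1,0;(a:ℚ_[ℓ]),1]) '' (Mt ℓ 1) := by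
      rw [Sa_eq ℓ a]
      unfold Mt
      rw [Set.image_image]
      have hc : (fun x : Matrix (Fin 2) (Fin 2) ℚ_[ℓ] => x * tDiag ℓ 1 * !![1,0;(a:ℚ_[ℓ]),1])
          = fun x => x * (tDiag ℓ 1 * !![1,0;(a:ℚ_[ℓ]),1]) := funext fun x => mul_assoc _ _ _
      rw [hc, tDiag_one]
      have hp : !![(ℓ:ℚ_[ℓ]),0;0,1] * !![1,0;(a:ℚ_[ℓ]),1] = !![(ℓ:ℚ_[ℓ]),0;(a:ℚ_[ℓ]),1] := by
        rw [Matrix.mul_fin_two]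
        norm_num
      rw [hp]
    rw [himg]
    refine setIntegral_translate ℓ ν hinv f hK _ ?_ ?_ _
    · intro i j
      fin_cases i <;> fin_cases j <;> simp [nat_norm_le ℓ a]
    · rw [Matrix.det_fin_two_of]
      norm_num
  have hSinf_int : (∫ x in SinfSet ℓ, f x ∂ν) = ∫ x in Mt ℓ 1, f x ∂ν := by
    have himg : SinfSet ℓ = (fun y => y * !![0,1;1,0]) '' (Mt ℓ 1) := by
      rw [Sinf_eq ℓ]
      unfold Mt
      rw [Set.image_image]
      have hc : (fun x : Matrix (Fin 2) (Fin 2) ℚ_[ℓ] => x * tDiag ℓ 1 * !![0,1;1,0])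
          = fun x => x * (tDiag ℓ 1 * !![0,1;1,0]) := funext fun x => mul_assoc _ _ _
      rw [hc, tDiag_one]
      have hp : !![(ℓ:ℚ_[ℓ]),0;0,1] * !![0,1;1,0] = !![0,(ℓ:ℚ_[ℓ]);1,0] := by
        rw [Matrix.mul_fin_two]
        norm_num
      rw [hp]
    rw [himg]
    refine setIntegral_translate ℓ ν hinv f hK _ ?_ ?_ _
    · intro i j
      fin_cases i <;> fin_cases j <;> norm_num
    · rw [Matrix.det_fin_two_of]
      norm_num
  have hT_int : (∫ x in TSet ℓ, f x ∂ν) = ∫ x in Mt ℓ 2, f x ∂ν := by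
    rw [T_eq ℓ]
  rw [hT_int, hSinf_int, Finset.sum_congr rfl (fun a _ => hSa_int a), Finset.sum_const,
    Finset.card_range, nsmul_eq_mul] at big
  linear_combination big

end
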